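/- Assume a_i ≥ 1. Then the ℚ-linear map φ_i is injective and φ_i(N_i) = N'; that is, φ_i restricts to an isomorphism of ℤ-modules from N_i onto N'. In particular, the image under φ_i of any ℤ-basis of N_i is a ℤ-basis of N'. (Step (ii) in the proof of Proposition 3.3.) -/

import Mathlib

lemma intvec_mem {n : ℕ} (w : Fin n → ℤ) :
    (fun j => (w j : ℚ)) ∈ Submodule.span ℤ
      (Set.range fun j : Fin n => (Pi.single j 1 : Fin n → ℚ)) := by
  have h : (fun j => (w j : ℚ)) = ∑ j : Fin n, w j • (Pi.single j 1 : Fin n → ℚ) := by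
    funext k
    simp [Finset.sum_apply, Pi.single_apply, mul_ite]
  rw [h]
  exact Submodule.sum_mem _ fun j _ =>
    Submodule.smul_mem _ _ (Submodule.subset_span ⟨j, rfl⟩)

theorem phi_injective_and_maps_Ni_onto_N'
    {m : ℕ} (r : ℕ) (hr : 1 ≤ r) (a : Fin (m + 2) → ℕ)
    (ha0 : a 0 = 1) (ha : ∀ j, a j < r)
    (i : Fin (m + 2)) (hi : i ≠ 0) (hai : 1 ≤ a i) :
    Function.Injective
        (fun (x : Fin (m + 2) → ℚ) (j : Fin (m + 2)) =>
          if j = i then ((a i : ℚ) / r) * x i else x j + ((a j : ℚ) / r) * x i) ∧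
      (fun (x : Fin (m + 2) → ℚ) (j : Fin (m + 2)) =>
            if j = i then ((a i : ℚ) / r) * x i else x j + ((a j : ℚ) / r) * x i) ''
          (Submodule.span ℤ (insert
              (fun j => if j = i then (((-(r : ℤ)) % (a i : ℤ) : ℤ) : ℚ) / (a i)
                else ((a j % a i : ℕ) : ℚ) / (a i))
              (Set.range fun j : Fin (m + 2) => (Pi.single j 1 : Fin (m + 2) → ℚ))) :
            Set (Fin (m + 2) → ℚ))
        = (Submodule.span ℤ (insert (fun j => (a j : ℚ) / r)
            (Set.range fun j : Fin (m + 2) => (Pi.single j 1 : Fin (m + 2) → ℚ))) :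
            Set (Fin (m + 2) → ℚ)) := by
  have hr0 : (r : ℚ) ≠ 0 := by
    have : 0 < r := hr
    positivity
  have hai0 : (a i : ℚ) ≠ 0 := by
    have : 0 < a i := hai
    positivity
  set f : (Fin (m + 2) → ℚ) → (Fin (m + 2) → ℚ) :=
    fun x j => if j = i then ((a i : ℚ) / r) * x i else x j + ((a j : ℚ) / r) * x i
    with hfdef
  set gbar : Fin (m + 2) → ℚ :=
    fun j => if j = i then (((-(r : ℤ)) % (a i : ℤ) : ℤ) : ℚ) / (a i)
      else ((a j % a i : ℕ) : ℚ) / (a i) with hgbar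
  set g : Fin (m + 2) → ℚ := fun j => (a j : ℚ) / r with hg
  set S₁ : Set (Fin (m + 2) → ℚ) :=
    insert gbar (Set.range fun j : Fin (m + 2) => (Pi.single j 1 : Fin (m + 2) → ℚ))
    with hS₁
  set S₂ : Set (Fin (m + 2) → ℚ) :=
    insert g (Set.range fun j : Fin (m + 2) => (Pi.single j 1 : Fin (m + 2) → ℚ))
    with hS₂
  -- φ as a ℤ-linear map
  set φ : (Fin (m + 2) → ℚ) →ₗ[ℤ] (Fin (m + 2) → ℚ) :=
    { toFun := f
      map_add' := by
        intro x y
        funext j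
        by_cases hj : j = i <;> simp [hfdef, hj] <;> ring
      map_smul' := by
        intro c x
        funext j
        by_cases hj : j = i <;>
          simp [hfdef, hj, Pi.smul_apply, zsmul_eq_mul] <;> ring } with hφ
  constructor
  · -- Injectivity
    intro x y hxy
    have hI : (a i : ℚ) / r * x i = (a i : ℚ) / r * y i := by
      simpa [hfdef] using congrFun hxy i
    have hxi : x i = y i := by
      have hne : (a i : ℚ) / r ≠ 0 := div_ne_zero hai0 hr0
      exact mul_left_cancel₀ hne hI
    funext j
    by_cases hj : j = i
    · rw [hj, hxi]
    · have hJ : x j + (a j : ℚ) / r * x i = y j + (a j : ℚ) / r * y i := by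
        simpa [hfdef, hj] using congrFun hxy j
      rw [hxi] at hJ
      linarith
  · -- Image equality
    -- auxiliary computations
    set q : ℤ := -((-(r : ℤ)) / (a i : ℤ)) with hqdef
    have hq : ((-(r : ℤ)) % (a i : ℤ)) = -(r : ℤ) + (a i : ℤ) * q := by
      have := Int.emod_add_mul_ediv (-(r : ℤ)) (a i : ℤ)
      rw [hqdef]; linarith
    have hqQ : (((-(r : ℤ)) % (a i : ℤ) : ℤ) : ℚ) = -(r : ℚ) + (a i : ℚ) * q := by
      rw [hq]; push_cast; ring
    have hmod : ∀ j : Fin (m + 2), ((a j % a i : ℕ) : ℚ)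
        = (a j : ℚ) - (a i : ℚ) * ((a j / a i : ℕ) : ℚ) := by
      intro j
      have := Nat.mod_add_div (a j) (a i)
      have : ((a j % a i : ℕ) : ℚ) + (a i : ℚ) * ((a j / a i : ℕ) : ℚ) = (a j : ℚ) := by
        exact_mod_cast congrArg (Nat.cast : ℕ → ℚ) this
      linarith
    set v : Fin (m + 2) → ℤ := fun j => if j = i then 1 else ((a j / a i : ℕ) : ℤ)
      with hv
    have H1 : f gbar = q • g - (fun j => ((v j : ℤ) : ℚ)) := by
      funext j
      by_cases hj : j = i
      · simp only [hfdef, hgbar, hg, hv, hj, if_pos rfl, Pi.sub_apply, Pi.smul_apply,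
          zsmul_eq_mul, Pi.mul_apply, Pi.intCast_apply]
        rw [hqQ]
        push_cast
        field_simp
        ring
      · simp only [hfdef, hgbar, hg, hv, Pi.sub_apply, Pi.smul_apply, Pi.mul_apply,
          zsmul_eq_mul, if_neg hj, if_pos rfl, if_true, if_false, Int.cast_natCast, Pi.intCast_apply]
        rw [hqQ, hmod j]
        field_simp
        ring
    have H2 : ∀ j : Fin (m + 2), j ≠ i → f (Pi.single j 1) = Pi.single j 1 := by
      intro j hj
      funext k
      by_cases hk : k = i
      · simp [hfdef, hk, Pi.single_apply, Ne.symm hj]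
      · simp [hfdef, hk, Pi.single_apply, Ne.symm hj]
    have H3 : f (Pi.single i 1) = g := by
      funext k
      by_cases hk : k = i
      · simp [hfdef, hg, hk]
      · simp [hfdef, hg, hk, Pi.single_apply]
    -- main set equality via span
    have key : Submodule.span ℤ (f '' S₁) = Submodule.span ℤ S₂ := by
      apply Submodule.span_eq_span
      · -- f '' S₁ ⊆ span ℤ S₂
        rintro _ ⟨x, hx, rfl⟩
        rcases hx with hx | ⟨j, rfl⟩
        · -- x = gbar
          rw [hx, H1]
          refine sub_mem (Submodule.smul_mem _ q (Submodule.subset_span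
            (Set.mem_insert _ _))) ?_
          exact Submodule.span_mono (Set.subset_insert _ _) (intvec_mem v)
        · by_cases hj : j = i
          · rw [hj, H3]
            exact Submodule.subset_span (Set.mem_insert _ _)
          · rw [H2 j hj]
            exact Submodule.subset_span (Set.mem_insert_of_mem _ ⟨j, rfl⟩)
      · -- S₂ ⊆ span ℤ (f '' S₁)
        rintro x (hx | ⟨j, rfl⟩)
        · -- x = g
          rw [hx, ← H3]
          exact Submodule.subset_span ⟨_, Set.mem_insert_of_mem _ ⟨i, rfl⟩, rfl⟩
        · by_cases hj : j = i
          · -- Pi.single i 1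
            rw [hj]
            show (Pi.single i 1 : Fin (m + 2) → ℚ) ∈ (Submodule.span ℤ (f '' S₁) : Set _)
            set w : Fin (m + 2) → ℤ := fun k => if k = i then 0 else ((a k / a i : ℕ) : ℤ)
              with hw
            have hweq : (Pi.single i 1 : Fin (m + 2) → ℚ)
                = q • f (Pi.single i 1) - f gbar - (fun k => ((w k : ℤ) : ℚ)) := by
              rw [H3, H1]
              funext k
              by_cases hk : k = i
              · simp [hk, hv, hw, Pi.single_apply]
              · simp [hk, hv, hw, Pi.single_apply]
            rw [hweq]
            have hmem1 : f (Pi.single i 1) ∈ Submodule.span ℤ (f '' S₁) :=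
              Submodule.subset_span ⟨_, Set.mem_insert_of_mem _ ⟨i, rfl⟩, rfl⟩
            have hmem2 : f gbar ∈ Submodule.span ℤ (f '' S₁) :=
              Submodule.subset_span ⟨_, Set.mem_insert _ _, rfl⟩
            have hmem3 : (fun k => ((w k : ℤ) : ℚ)) ∈ Submodule.span ℤ (f '' S₁) := by
              have hsum : (fun k => ((w k : ℤ) : ℚ))
                  = ∑ k : Fin (m + 2), w k • (Pi.single k 1 : Fin (m + 2) → ℚ) := by
                funext l
                simp [Finset.sum_apply, Pi.single_apply, mul_ite]
              rw [hsum]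
              refine Submodule.sum_mem _ fun k _ => ?_
              by_cases hk : k = i
              · simp [hw, hk]
              · exact Submodule.smul_mem _ _ (by
                  rw [← H2 k hk]
                  exact Submodule.subset_span ⟨_, Set.mem_insert_of_mem _ ⟨k, rfl⟩, rfl⟩)
            exact sub_mem (sub_mem (Submodule.smul_mem _ q hmem1) hmem2) hmem3
          · show (Pi.single j 1 : Fin (m + 2) → ℚ) ∈ (Submodule.span ℤ (f '' S₁) : Set _)
            rw [← H2 j hj]
            exact Submodule.subset_span ⟨_, Set.mem_insert_of_mem _ ⟨j, rfl⟩, rfl⟩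
    have hφf : ⇑φ = f := rfl
    calc f '' (Submodule.span ℤ S₁ : Set (Fin (m + 2) → ℚ))
        = ((Submodule.span ℤ S₁).map φ : Set (Fin (m + 2) → ℚ)) := rfl
      _ = (Submodule.span ℤ (f '' S₁) : Set (Fin (m + 2) → ℚ)) := by
          rw [Submodule.map_span, hφf]
      _ = (Submodule.span ℤ S₂ : Set (Fin (m + 2) → ℚ)) := by rw [key]
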